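/- Let n, k ∈ ℕ with n odd, and let a, b ∈ {0, 1, −1}^n be vectors with disjoint supports such that the circulant matrices c(a) and c(b) are circulant weighing matrices CW(n, k²). Define w ∈ ℝ^{2n} componentwise by: w_s = a_{s/2} + b_{s/2} if s is even; w_s = a_{(s+n)/2} − b_{(s+n)/2} if s is odd and s ≤ n − 2; and w_s = a_{(s−n)/2} − b_{(s−n)/2} if s is odd and s > n − 2. Then the circulant matrix c(w) is a circulant weighing matrix CW(2n, 4k²), i.e., w has entries in {0, 1, −1} and c(w) c(w)ᵀ = 4k² I. -/

import Mathlib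

open Matrix

/-- The circulant matrix `c(a)` with entries `c(a)_{i,j} = a_{(j-i) mod n}`. -/
def circ {n : ℕ} (a : Fin n → ℝ) : Matrix (Fin n) (Fin n) ℝ :=
  Matrix.of fun i j => a (j - i)

open Fin.NatCast Fin.CommRing in
set_option maxHeartbeats 1600000 in
/-- Disjoint-support doubling construction: from two `CW(n, k²)` (with `n` odd) whose
first rows have disjoint supports, the interleaved vector `w` yields a `CW(2n, 4k²)`. -/
theorem disjoint_support_construction {n k : ℕ} (hodd : Odd n) (hpos : 0 < n)
    (a b : Fin n → ℝ)
    (ha : ∀ s, a s ∈ ({0, 1, -1} : Set ℝ)) (hb : ∀ s, b s ∈ ({0, 1, -1} : Set ℝ))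
    (hdisj : ∀ s, a s = 0 ∨ b s = 0)
    (hA : circ a * (circ a)ᵀ = ((k : ℝ) ^ 2) • (1 : Matrix (Fin n) (Fin n) ℝ))
    (hB : circ b * (circ b)ᵀ = ((k : ℝ) ^ 2) • (1 : Matrix (Fin n) (Fin n) ℝ))
    (w : Fin (2 * n) → ℝ)
    (hweven : ∀ s : Fin (2 * n), s.val % 2 = 0 →
      w s = a ⟨s.val / 2, by have := s.isLt; omega⟩ + b ⟨s.val / 2, by have := s.isLt; omega⟩)
    (hwodd₁ : ∀ s : Fin (2 * n), s.val % 2 = 1 → ∀ _hle : s.val ≤ n - 2,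
      w s = a ⟨(s.val + n) / 2, by have := s.isLt; omega⟩ -
            b ⟨(s.val + n) / 2, by have := s.isLt; omega⟩)
    (hwodd₂ : ∀ s : Fin (2 * n), s.val % 2 = 1 → n - 2 < s.val →
      w s = a ⟨(s.val - n) / 2, by have := s.isLt; omega⟩ -
            b ⟨(s.val - n) / 2, by have := s.isLt; omega⟩) :
    (∀ s, w s ∈ ({0, 1, -1} : Set ℝ)) ∧
      circ w * (circ w)ᵀ = ((4 * (k : ℝ) ^ 2)) • (1 : Matrix (Fin (2 * n)) (Fin (2 * n)) ℝ) := by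
  haveI : NeZero n := ⟨hpos.ne'⟩
  haveI : NeZero (2 * n) := ⟨by omega⟩
  obtain ⟨j₀, hj₀⟩ := hodd
  set h : Fin n := (((n + 1) / 2 : ℕ) : Fin n) with hhdef
  have f1 : (2 : Fin n) * h = 1 := by
    have e1 : ((2 * ((n + 1) / 2) : ℕ) : Fin n) = ((n + 1 : ℕ) : Fin n) := by
      congr 1; omega
    push_cast at e1
    rw [Fin.natCast_self, zero_add] at e1
    rw [hhdef]
    exact e1
  have hcast2 : ∀ u : ℕ, ((2 * u : ℕ) : Fin n) * h = (u : Fin n) := by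
    intro u
    push_cast
    rw [mul_comm (2 : Fin n), mul_assoc, f1, mul_one]
  have castmod : ∀ x : ℕ, ((x % (2 * n) : ℕ) : Fin n) = (x : Fin n) := by
    intro x
    conv_rhs => rw [← Nat.div_add_mod x (2 * n)]
    push_cast
    simp [Fin.natCast_self]
  have natCast_mk : ∀ (u : ℕ) (hu : u < n), ((u : ℕ) : Fin n) = ⟨u, hu⟩ := by
    intro u hu
    apply Fin.ext
    rw [Fin.val_natCast]
    exact Nat.mod_eq_of_lt hu
  set m : Fin (2 * n) → Fin n := fun s => ((s.val : ℕ) : Fin n) * h with hm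
  have madd : ∀ s d : Fin (2 * n), m (s + d) = m s + m d := by
    intro s d
    simp only [hm]
    rw [Fin.val_add, castmod]
    push_cast
    ring
  have msub : ∀ s d : Fin (2 * n), m (s - d) = m s - m d := by
    intro s d
    have h1 := madd (s - d) d
    rw [sub_add_cancel] at h1
    rw [h1]; ring
  have m0 : m 0 = 0 := by simp [hm]
  set eps : Fin (2 * n) → ℝ := fun s => (-1 : ℝ) ^ s.val with heps
  have epsmod : ∀ x : ℕ, (-1 : ℝ) ^ (x % (2 * n)) = (-1 : ℝ) ^ x := by
    intro x
    conv_rhs => rw [← Nat.div_add_mod x (2 * n)]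
    rw [pow_add]
    have e2 : 2 * n * (x / (2 * n)) = 2 * (n * (x / (2 * n))) := by ring
    rw [e2, pow_mul]
    norm_num
  have epsadd : ∀ s d : Fin (2 * n), eps (s + d) = eps s * eps d := by
    intro s d
    simp only [heps]
    rw [Fin.val_add, epsmod, pow_add]
  have epssq : ∀ d : Fin (2 * n), eps d * eps d = 1 := by
    intro d
    simp only [heps]
    rw [← pow_add, ← two_mul, pow_mul]
    norm_num
  have epssub : ∀ s d : Fin (2 * n), eps (s - d) = eps s * eps d := by
    intro s d
    have h1 := epsadd (s - d) d
    rw [sub_add_cancel] at h1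
    rw [h1, mul_assoc, epssq, mul_one]
  -- uniform formula for w
  have hwform : ∀ s : Fin (2 * n), w s = a (m s) + eps s * b (m s) := by
    intro s
    rcases Nat.even_or_odd s.val with he | ho
    · have h2 : s.val % 2 = 0 := Nat.even_iff.mp he
      have heps1 : eps s = 1 := by simp only [heps]; exact he.neg_one_pow
      rw [hweven s h2, heps1, one_mul]
      have hmv : m s = ⟨s.val / 2, by have := s.isLt; omega⟩ := by
        simp only [hm]
        have e : ((s.val : ℕ) : Fin n) = ((2 * (s.val / 2) : ℕ) : Fin n) := by
          congr 1; omega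
        rw [e, hcast2]
        exact natCast_mk _ _
      rw [hmv]
    · have h2 : s.val % 2 = 1 := Nat.odd_iff.mp ho
      have heps1 : eps s = -1 := by simp only [heps]; exact ho.neg_one_pow
      by_cases hle : s.val ≤ n - 2
      · rw [hwodd₁ s h2 hle, heps1]
        have hmv : m s = ⟨(s.val + n) / 2, by have := s.isLt; omega⟩ := by
          simp only [hm]
          have e : ((s.val : ℕ) : Fin n) = ((2 * ((s.val + n) / 2) : ℕ) : Fin n) := by
            have e3 : 2 * ((s.val + n) / 2) = s.val + n := by omega
            rw [e3]
            push_cast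
            rw [Fin.natCast_self, add_zero]
          rw [e, hcast2]
          exact natCast_mk _ _
        rw [hmv]; ring
      · push_neg at hle
        rw [hwodd₂ s h2 hle, heps1]
        have hge : n ≤ s.val := by omega
        have hmv : m s = ⟨(s.val - n) / 2, by have := s.isLt; omega⟩ := by
          simp only [hm]
          have e : ((s.val : ℕ) : Fin n) = ((2 * ((s.val - n) / 2) : ℕ) : Fin n) := by
            have e3 : 2 * ((s.val - n) / 2) + n = s.val := by omega
            conv_lhs => rw [← e3]
            push_cast
            rw [Fin.natCast_self, add_zero]
          rw [e, hcast2]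
          exact natCast_mk _ _
        rw [hmv]; ring
  -- autocorrelation
  have autocorr : ∀ (c : Fin n → ℝ),
      circ c * (circ c)ᵀ = ((k : ℝ) ^ 2) • (1 : Matrix (Fin n) (Fin n) ℝ) →
      ∀ e : Fin n, (∑ t : Fin n, c t * c (t - e)) = (k : ℝ) ^ 2 * (if e = 0 then 1 else 0) := by
    intro c hc e
    have h1 := congrFun (congrFun hc 0) e
    simp only [Matrix.mul_apply, Matrix.transpose_apply, circ, Matrix.of_apply,
      Matrix.smul_apply, Matrix.one_apply, smul_eq_mul, sub_zero] at h1
    rw [h1]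
    by_cases he : e = 0
    · simp [he]
    · rw [if_neg he, if_neg (fun hh => he hh.symm)]
  have hPa := autocorr a hA
  have hPb := autocorr b hB
  constructor
  · -- entries in {0, 1, -1}
    intro s
    rw [hwform s]
    have hes : eps s = 1 ∨ eps s = -1 := by
      simp only [heps]
      rcases Nat.even_or_odd s.val with he | ho
      · left; exact he.neg_one_pow
      · right; exact ho.neg_one_pow
    have hA' := ha (m s); have hB' := hb (m s)
    simp only [Set.mem_insert_iff, Set.mem_singleton_iff] at hA' hB' ⊢
    rcases hdisj (m s) with h0 | h0
    · rw [h0]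
      rcases hes with he | he <;> rw [he] <;>
        rcases hB' with h2 | h2 | h2 <;> rw [h2] <;> norm_num
    · rw [h0]
      rcases hes with he | he <;> rw [he] <;>
        rcases hA' with h2 | h2 | h2 <;> rw [h2] <;> norm_num
  · -- matrix identity
    ext i j
    rw [Matrix.mul_apply]
    simp only [circ, Matrix.transpose_apply, Matrix.of_apply, Matrix.smul_apply,
      Matrix.one_apply, smul_eq_mul]
    set d : Fin (2 * n) := j - i with hd
    have hij : (i = j) ↔ (d = 0) := by rw [hd, sub_eq_zero, eq_comm]
    have hre : (∑ t : Fin (2 * n), w (t - i) * w (t - j))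
        = ∑ s : Fin (2 * n), w s * w (s - d) := by
      refine (Fintype.sum_equiv (Equiv.addRight i)
        (fun s => w s * w (s - d)) (fun t => w (t - i) * w (t - j)) ?_).symm
      intro s
      have e1 : s + i - i = s := by ring
      have e2 : s + i - j = s - d := by rw [hd]; ring
      simp only [Equiv.coe_addRight, e1, e2]
    rw [hre]
    -- split the sum over even/odd positions
    have hψlt : ∀ (p : Fin 2) (t : Fin n), 2 * t.val + p.val < 2 * n := by
      intro p t; have := p.isLt; have := t.isLt; omega
    set ψ : Fin 2 × Fin n → Fin (2 * n) := fun pt => ⟨2 * pt.2.val + pt.1.val, hψlt pt.1 pt.2⟩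
      with hψdef
    have hbij : Function.Bijective ψ := by
      rw [Fintype.bijective_iff_injective_and_card]
      refine ⟨?_, by simp⟩
      rintro ⟨p, t⟩ ⟨p', t'⟩ hpt
      have h3 : 2 * t.val + p.val = 2 * t'.val + p'.val := congrArg Fin.val hpt
      have hp := p.isLt; have hp' := p'.isLt
      have h4 : p.val = p'.val ∧ t.val = t'.val := by omega
      exact Prod.ext (Fin.ext h4.1) (Fin.ext h4.2)
    have hsplit : (∑ s : Fin (2 * n), w s * w (s - d))
        = ∑ pt : Fin 2 × Fin n, w (ψ pt) * w (ψ pt - d) :=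
      (Fintype.sum_bijective ψ hbij (fun pt => w (ψ pt) * w (ψ pt - d))
        (fun s => w s * w (s - d)) (fun pt => rfl)).symm
    rw [hsplit, Fintype.sum_prod_type, Fin.sum_univ_two]
    have hm0 : ∀ t : Fin n, m (ψ (0, t)) = t := by
      intro t
      simp only [hm, hψdef, Fin.val_zero, Nat.add_zero]
      rw [hcast2]
      exact Fin.cast_val_eq_self _
    have hm1 : ∀ t : Fin n, m (ψ (1, t)) = t + h := by
      intro t
      simp only [hm, hψdef, Fin.val_one]
      have e : ((2 * t.val + 1 : ℕ) : Fin n) = ((2 * t.val : ℕ) : Fin n) + 1 := by push_cast; ring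
      rw [e, add_mul, one_mul, hcast2, Fin.cast_val_eq_self]
    have he0 : ∀ t : Fin n, eps (ψ (0, t)) = 1 := by
      intro t
      simp only [heps, hψdef, Fin.val_zero, Nat.add_zero]
      exact (even_two_mul t.val).neg_one_pow
    have he1 : ∀ t : Fin n, eps (ψ (1, t)) = -1 := by
      intro t
      simp only [heps, hψdef, Fin.val_one]
      exact Odd.neg_one_pow ⟨t.val, by ring⟩
    have S0 : (∑ t : Fin n, w (ψ (0, t)) * w (ψ (0, t) - d))
        = ∑ t : Fin n, (a t + b t) * (a (t - m d) + eps d * b (t - m d)) := by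
      refine Finset.sum_congr rfl fun t _ => ?_
      rw [hwform (ψ (0, t)), hwform (ψ (0, t) - d), msub, epssub, hm0, he0]
      ring
    have S1 : (∑ t : Fin n, w (ψ (1, t)) * w (ψ (1, t) - d))
        = ∑ t : Fin n, (a t - b t) * (a (t - m d) - eps d * b (t - m d)) := by
      have step : ∀ t : Fin n, w (ψ (1, t)) * w (ψ (1, t) - d)
          = (a (t + h) - b (t + h)) * (a (t + h - m d) - eps d * b (t + h - m d)) := by
        intro t
        rw [hwform (ψ (1, t)), hwform (ψ (1, t) - d), msub, epssub, hm1, he1]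
        ring
      calc (∑ t : Fin n, w (ψ (1, t)) * w (ψ (1, t) - d))
          = ∑ t : Fin n, (a (t + h) - b (t + h)) * (a (t + h - m d) - eps d * b (t + h - m d)) :=
            Finset.sum_congr rfl fun t _ => step t
        _ = ∑ t : Fin n, (a t - b t) * (a (t - m d) - eps d * b (t - m d)) := by
            exact Fintype.sum_equiv (Equiv.addRight h)
              (fun t => (a (t + h) - b (t + h)) * (a (t + h - m d) - eps d * b (t + h - m d)))
              (fun u => (a u - b u) * (a (u - m d) - eps d * b (u - m d)))
              (fun t => rfl)
    rw [S0, S1]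
    have comb : (∑ t : Fin n, (a t + b t) * (a (t - m d) + eps d * b (t - m d)))
        + (∑ t : Fin n, (a t - b t) * (a (t - m d) - eps d * b (t - m d)))
        = 2 * (∑ t : Fin n, a t * a (t - m d)) + 2 * eps d * (∑ t : Fin n, b t * b (t - m d)) := by
      rw [Finset.mul_sum, Finset.mul_sum, ← Finset.sum_add_distrib, ← Finset.sum_add_distrib]
      refine Finset.sum_congr rfl fun t _ => ?_
      ring
    rw [comb, hPa (m d), hPb (m d)]
    by_cases hdz : d = 0
    · rw [if_pos (hij.mpr hdz), hdz, m0, if_pos rfl]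
      have h5 : eps (0 : Fin (2 * n)) = 1 := by simp [heps]
      rw [h5]
      ring
    · rw [if_neg (fun hh => hdz (hij.mp hh))]
      by_cases hmd : m d = 0
      · have h0 : ((d.val : ℕ) : Fin n) = 0 := by
          have h2 : ((d.val : ℕ) : Fin n) = ((d.val : ℕ) : Fin n) * (h * 2) := by
            rw [mul_comm h 2, f1, mul_one]
          simp only [hm] at hmd
          rw [h2, ← mul_assoc, hmd, zero_mul]
        have hdvd : n ∣ d.val := Fin.natCast_eq_zero.mp h0
        have hlt := d.isLt
        have hne : d.val ≠ 0 := fun hc => hdz (Fin.ext (by rw [hc, Fin.val_zero]))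
        obtain ⟨c, hc⟩ := hdvd
        have hc2 : c < 2 := by
          by_contra hcge
          push_neg at hcge
          have : n * 2 ≤ n * c := Nat.mul_le_mul_left n hcge
          omega
        have hval : d.val = n := by
          interval_cases c <;> omega
        have hepsd : eps d = -1 := by
          simp only [heps]
          rw [hval]
          exact Odd.neg_one_pow ⟨j₀, by omega⟩
        rw [if_pos hmd, hepsd]
        ring
      · rw [if_neg hmd]
        ring
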